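/- In the graph G′ constructed below: for any node a ∈ V_1 with copies a ∈ S and a′ ∈ T, every directed path in G′ from a to a′ that visits at least one of the nodes o_1, o_2, o_3, o_4 has total weight at least 8t. -/

import Mathlib

open scoped ENNReal

/-- Total weight of the walk that starts at `u` and then visits the vertices of `l` in
order.  Non-edges have weight `⊤`. -/
noncomputable def walkWeight {V : Type*} (w : V → V → ℝ≥0∞) : V → List V → ℝ≥0∞
  | _, [] => 0
  | u, x :: xs => w u x + walkWeight w x xs

/-- Shortest-path distance induced by the weight function `w` (`⊤` if there is no path). -/
noncomputable def netDist {V : Type*} (w : V → V → ℝ≥0∞) (u v : V) : ℝ≥0∞ :=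
  ⨅ (l : List V) (_ : (u :: l).getLast (List.cons_ne_nil u l) = v), walkWeight w u l

/-- Vertices of the graph `G'`: `A₁` will be `V₁` (for the two copies `S` and `T`),
`A₂` will be `V₂ ∪ ⋯ ∪ V_k` (for the two copies `fwd` and `bwd`), `gj` is the bit gadget
`J = {g_1, …, g_d}`, and `o1, …, o4` are the four omni-nodes. -/
inductive GVert (A₁ A₂ : Type) (d : ℕ) : Type
  | vS : A₁ → GVert A₁ A₂ d
  | vT : A₁ → GVert A₁ A₂ d
  | fwd : A₂ → GVert A₁ A₂ d
  | bwd : A₂ → GVert A₁ A₂ d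
  | gj : Fin d → GVert A₁ A₂ d
  | o1 : GVert A₁ A₂ d
  | o2 : GVert A₁ A₂ d
  | o3 : GVert A₁ A₂ d
  | o4 : GVert A₁ A₂ d

open Classical in
/-- Edge weights of `G'` (non-edges have weight `⊤`).  Here `part : A → ZMod k` gives the
part `V_{i+1}` of each vertex `i` of `G` (so `V₁ = {a | part a = 0}`), `E` is the edge
relation of `G`, `t` is the weight scale and `ident a` is the identifier `ā ∈ {0,1}^d`. -/
noncomputable def gw {A : Type} (k : ℕ) (part : A → ZMod k) (E : A → A → Prop)
    (d t : ℕ) (ident : A → Fin d → Bool) :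
    GVert {a : A // part a = 0} {x : A // part x ≠ 0} d →
      GVert {a : A // part a = 0} {x : A // part x ≠ 0} d → ℝ≥0∞
  -- edges of G inside V₂ ∪ ⋯ ∪ V_k, copied forwards and backwards
  | .fwd x, .fwd y => if E x.1 y.1 then 1 else ⊤
  | .bwd y, .bwd x => if E x.1 y.1 then 1 else ⊤
  -- edges of G leaving V₁
  | .vS a, .fwd x => if E a.1 x.1 then ((3 * t + 1 : ℕ) : ℝ≥0∞) else ⊤
  | .bwd x, .vS a => if E a.1 x.1 then 1 else ⊤
  -- edges of G entering V₁
  | .fwd x, .vT a => if E x.1 a.1 then ((3 * t + 1 : ℕ) : ℝ≥0∞) else ⊤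
  | .vT a, .bwd x => if E x.1 a.1 then 1 else ⊤
  -- omni-nodes to/from the fwd and bwd copies
  | .o1, .fwd _ => 1
  | .fwd _, .o2 => 1
  | .o3, .bwd _ => 1
  | .bwd _, .o4 => 1
  -- S to/from omni-nodes
  | .vS _, .o1 => ((5 * t + 1 : ℕ) : ℝ≥0∞)
  | .o2, .vS _ => ((t + 1 : ℕ) : ℝ≥0∞)
  | .vS _, .o3 => ((4 * t + 1 : ℕ) : ℝ≥0∞)
  | .o4, .vS _ => ((2 * t + 1 : ℕ) : ℝ≥0∞)
  -- T to/from omni-nodes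
  | .vT _, .o1 => ((t + 1 : ℕ) : ℝ≥0∞)
  | .o2, .vT _ => ((5 * t + 1 : ℕ) : ℝ≥0∞)
  | .vT _, .o3 => ((2 * t + 1 : ℕ) : ℝ≥0∞)
  | .o4, .vT _ => ((4 * t + 1 : ℕ) : ℝ≥0∞)
  -- weight-3t edges between distinct omni-nodes
  | .o1, .o2 => ((3 * t : ℕ) : ℝ≥0∞)
  | .o1, .o3 => ((3 * t : ℕ) : ℝ≥0∞)
  | .o1, .o4 => ((3 * t : ℕ) : ℝ≥0∞)
  | .o2, .o1 => ((3 * t : ℕ) : ℝ≥0∞)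
  | .o2, .o3 => ((3 * t : ℕ) : ℝ≥0∞)
  | .o2, .o4 => ((3 * t : ℕ) : ℝ≥0∞)
  | .o3, .o1 => ((3 * t : ℕ) : ℝ≥0∞)
  | .o3, .o2 => ((3 * t : ℕ) : ℝ≥0∞)
  | .o3, .o4 => ((3 * t : ℕ) : ℝ≥0∞)
  | .o4, .o1 => ((3 * t : ℕ) : ℝ≥0∞)
  | .o4, .o2 => ((3 * t : ℕ) : ℝ≥0∞)
  | .o4, .o3 => ((3 * t : ℕ) : ℝ≥0∞)
  -- the bit gadget: S to/from J
  | .vS a, .gj j => if ident a.1 j then ((3 * t + 1 : ℕ) : ℝ≥0∞) else ((5 * t + 1 : ℕ) : ℝ≥0∞)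
  | .gj j, .vS a => if ident a.1 j then ((2 * t + 1 : ℕ) : ℝ≥0∞) else 1
  -- the bit gadget: T to/from J
  | .gj j, .vT a => if ident a.1 j then ((5 * t + 1 : ℕ) : ℝ≥0∞) else ((3 * t + 1 : ℕ) : ℝ≥0∞)
  | .vT a, .gj j => if ident a.1 j then 1 else ((2 * t + 1 : ℕ) : ℝ≥0∞)
  -- weight-(3t+1) edges between J and the omni-nodes, in both directions
  | .gj _, .o1 => ((3 * t + 1 : ℕ) : ℝ≥0∞)
  | .gj _, .o2 => ((3 * t + 1 : ℕ) : ℝ≥0∞)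
  | .gj _, .o3 => ((3 * t + 1 : ℕ) : ℝ≥0∞)
  | .gj _, .o4 => ((3 * t + 1 : ℕ) : ℝ≥0∞)
  | .o1, .gj _ => ((3 * t + 1 : ℕ) : ℝ≥0∞)
  | .o2, .gj _ => ((3 * t + 1 : ℕ) : ℝ≥0∞)
  | .o3, .gj _ => ((3 * t + 1 : ℕ) : ℝ≥0∞)
  | .o4, .gj _ => ((3 * t + 1 : ℕ) : ℝ≥0∞)
  -- all remaining pairs: no edge
  | _, _ => ⊤

/-- `a ∈ V₁` lies on a `k`-cycle of `G`: there are `x₂ ∈ V₂, …, x_k ∈ V_k` with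
`(a,x₂), (x₂,x₃), …, (x_{k-1},x_k), (x_k,a)` all edges of `G`. -/
def liesOnKCycle {A : Type} (E : A → A → Prop) (k : ℕ) (a : A) : Prop :=
  ∃ x : ℕ → A, x 0 = a ∧ (∀ i, i < k - 1 → E (x i) (x (i + 1))) ∧ E (x (k - 1)) a

/-- Forward potential: lower bound on distance from any node of `S`. -/
def phiPot {A₁ A₂ : Type} {d : ℕ} (t : ℕ) : GVert A₁ A₂ d → ℕ
  | .vS _ => 0
  | .vT _ => 6 * t + 2
  | .fwd _ => 3 * t + 1
  | .bwd _ => 4 * t + 2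
  | .gj _ => 3 * t + 1
  | .o1 => 5 * t + 1
  | .o2 => 3 * t + 2
  | .o3 => 4 * t + 1
  | .o4 => 4 * t + 3

/-- Backward potential: lower bound on distance to any node of `T`. -/
def psiPot {A₁ A₂ : Type} {d : ℕ} (t : ℕ) : GVert A₁ A₂ d → ℕ
  | .vS _ => 6 * t + 2
  | .vT _ => 0
  | .fwd _ => 3 * t + 1
  | .bwd _ => 4 * t + 2
  | .gj _ => 3 * t + 1
  | .o1 => 3 * t + 2
  | .o2 => 5 * t + 1
  | .o3 => 4 * t + 3
  | .o4 => 4 * t + 1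

set_option maxHeartbeats 2000000 in
lemma phiPot_edge {A : Type} (k : ℕ) (part : A → ZMod k) (E : A → A → Prop)
    (d t : ℕ) (ident : A → Fin d → Bool) (ht : 1 ≤ t)
    (u v : GVert {a : A // part a = 0} {x : A // part x ≠ 0} d) :
    (phiPot t v : ℝ≥0∞) ≤ gw k part E d t ident u v + phiPot t u := by
  cases u <;> cases v <;>
    simp only [gw, phiPot] <;>
    (try split_ifs) <;>
    first
      | (norm_cast; omega)
      | simp

set_option maxHeartbeats 2000000 in
lemma psiPot_edge {A : Type} (k : ℕ) (part : A → ZMod k) (E : A → A → Prop)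
    (d t : ℕ) (ident : A → Fin d → Bool) (ht : 1 ≤ t)
    (u v : GVert {a : A // part a = 0} {x : A // part x ≠ 0} d) :
    (psiPot t u : ℝ≥0∞) ≤ gw k part E d t ident u v + psiPot t v := by
  cases u <;> cases v <;>
    simp only [gw, psiPot] <;>
    (try split_ifs) <;>
    first
      | (norm_cast; omega)
      | simp

lemma walkWeight_split {V : Type*} (w : V → V → ℝ≥0∞) (x : V) (l₁ : List V) :
    ∀ (u : V) (l₂ : List V),
      walkWeight w u (l₁ ++ x :: l₂) = walkWeight w u (l₁ ++ [x]) + walkWeight w x l₂ := by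
  induction l₁ with
  | nil => intro u l₂; simp [walkWeight, add_assoc]
  | cons y ys ih =>
    intro u l₂
    simp only [List.cons_append, walkWeight, List.append_eq]
    rw [ih, add_assoc]

lemma pot_forward {V : Type*} (w : V → V → ℝ≥0∞) (φ : V → ℕ)
    (hφ : ∀ u v, (φ v : ℝ≥0∞) ≤ w u v + φ u) :
    ∀ (l : List V) (u z : V), (u :: l).getLast (List.cons_ne_nil u l) = z →
      (φ z : ℝ≥0∞) ≤ (φ u : ℝ≥0∞) + walkWeight w u l := by
  intro l
  induction l with
  | nil =>
    intro u z h
    simp only [List.getLast_singleton] at h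
    subst h; simp [walkWeight]
  | cons x xs ih =>
    intro u z h
    rw [List.getLast_cons (List.cons_ne_nil x xs)] at h
    have h₂ := ih x z h
    have h₃ := hφ u x
    calc (φ z : ℝ≥0∞) ≤ (φ x : ℝ≥0∞) + walkWeight w x xs := h₂
      _ ≤ (w u x + φ u) + walkWeight w x xs := add_le_add_left h₃ _
      _ = (φ u : ℝ≥0∞) + (w u x + walkWeight w x xs) := by ring
      _ = (φ u : ℝ≥0∞) + walkWeight w u (x :: xs) := rfl

lemma pot_backward {V : Type*} (w : V → V → ℝ≥0∞) (ψ : V → ℕ)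
    (hψ : ∀ u v, (ψ u : ℝ≥0∞) ≤ w u v + ψ v) :
    ∀ (l : List V) (u z : V), (u :: l).getLast (List.cons_ne_nil u l) = z →
      (ψ u : ℝ≥0∞) ≤ walkWeight w u l + (ψ z : ℝ≥0∞) := by
  intro l
  induction l with
  | nil =>
    intro u z h
    simp only [List.getLast_singleton] at h
    subst h; simp [walkWeight]
  | cons x xs ih =>
    intro u z h
    rw [List.getLast_cons (List.cons_ne_nil x xs)] at h
    have h₂ := ih x z h
    have h₃ := hψ u x
    calc (ψ u : ℝ≥0∞) ≤ w u x + ψ x := h₃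
      _ ≤ w u x + (walkWeight w x xs + ψ z) := add_le_add_right h₂ _
      _ = (w u x + walkWeight w x xs) + ψ z := by ring
      _ = walkWeight w u (x :: xs) + ψ z := rfl

/-- For `a ∈ V₁` with copies `a ∈ S` and `a′ ∈ T`, every directed
path (walk) in `G′` from `a` to `a′` that visits one of `o₁, o₂, o₃, o₄` has total weight at
least `8t`. -/
theorem stmt_14 {A : Type} (k t : ℕ) (hk : 3 ≤ k) (ht : 2 * k < t)
    (part : A → ZMod k) (E : A → A → Prop)
    (hE : ∀ u v : A, E u v → part v = part u + 1)
    (d : ℕ) (ident : A → Fin d → Bool)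
    (hid₁ : ∀ a b : A, part a = 0 → part b = 0 → a ≠ b →
      (∃ i : Fin d, ident a i = true ∧ ident b i = false) ∧
      (∃ j : Fin d, ident a j = false ∧ ident b j = true))
    (hid₂ : ∀ a b : A, part a = 0 → part b = 0 →
      (∃ i : Fin d, ident a i = true ∧ ident b i = true) ∧
      (∃ j : Fin d, ident a j = false ∧ ident b j = false))
    (a : A) (ha : part a = 0)
    (l : List (GVert {b : A // part b = 0} {x : A // part x ≠ 0} d))
    (hlast : (GVert.vS ⟨a, ha⟩ :: l).getLast (List.cons_ne_nil _ _) = GVert.vT ⟨a, ha⟩)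
    (hvisit : ∃ x ∈ GVert.vS ⟨a, ha⟩ :: l,
      x = GVert.o1 ∨ x = GVert.o2 ∨ x = GVert.o3 ∨ x = GVert.o4) :
    ((8 * t : ℕ) : ℝ≥0∞) ≤ walkWeight (gw k part E d t ident) (GVert.vS ⟨a, ha⟩) l := by
  have ht1 : 1 ≤ t := by omega
  set w := gw k part E d t ident with hw
  obtain ⟨x, hxmem, hxo⟩ := hvisit
  -- `x` is not the starting vertex, since `vS a` is not an omni-node
  have hxl : x ∈ l := by
    rcases List.mem_cons.mp hxmem with h | h
    · exfalso; rcases hxo with h' | h' | h' | h' <;> (rw [h'] at h; cases h)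
    · exact h
  obtain ⟨l₁, l₂, rfl⟩ := List.append_of_mem hxl
  -- split the walk at `x`
  rw [walkWeight_split]
  -- first part: from `vS a` to `x`
  have hlast₁ : ((GVert.vS (⟨a, ha⟩ : {b : A // part b = 0}) :: (l₁ ++ [x])).getLast
      (List.cons_ne_nil _ _)) = x :=
    List.getLast_concat (a := x) (l := GVert.vS (⟨a, ha⟩ : {b : A // part b = 0}) :: l₁)
  have h₁ := pot_forward w (phiPot t) (phiPot_edge k part E d t ident ht1)
    (l₁ ++ [x]) _ x hlast₁
  rw [show (phiPot t (GVert.vS (⟨a, ha⟩ : {b : A // part b = 0})) : ℝ≥0∞) = 0 by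
      simp [phiPot], zero_add] at h₁
  -- second part: from `x` to `vT a`
  have hne : l₁ ++ x :: l₂ ≠ [] := by simp
  have hlast₂ : (x :: l₂).getLast (List.cons_ne_nil _ _) = GVert.vT ⟨a, ha⟩ := by
    rw [List.getLast_cons hne] at hlast
    rw [← hlast]
    exact (List.getLast_append_of_ne_nil _ (List.cons_ne_nil _ _)).symm
  have h₂ := pot_backward w (psiPot t) (psiPot_edge k part E d t ident ht1)
    l₂ x _ hlast₂
  rw [show (psiPot t (GVert.vT (⟨a, ha⟩ : {b : A // part b = 0})) : ℝ≥0∞) = 0 by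
      simp [psiPot], add_zero] at h₂
  -- combine
  have hsum : ((8 * t : ℕ) : ℝ≥0∞) ≤ (phiPot t x : ℝ≥0∞) + (psiPot t x : ℝ≥0∞) := by
    rcases hxo with h | h | h | h <;> subst h <;>
      (rw [← Nat.cast_add]; exact_mod_cast (by simp [phiPot, psiPot]; omega : _)) 
  calc ((8 * t : ℕ) : ℝ≥0∞) ≤ (phiPot t x : ℝ≥0∞) + (psiPot t x : ℝ≥0∞) := hsum
    _ ≤ walkWeight w (GVert.vS ⟨a, ha⟩) (l₁ ++ [x]) + walkWeight w x l₂ :=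
      add_le_add h₁ h₂
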